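/- For T admitting an A-adjoint and α ∈ [0,1], ‖T‖_{A,α}² ≤ ‖(α/2)(T^{♯A}T + TT^{♯A}) + (1−α)T^{♯A}T‖_A. In particular, w_A(T)² ≤ min over α ∈ [0,1] of ‖(α/2)(T^{♯A}T + TT^{♯A}) + (1−α)T^{♯A}T‖_A ≤ (1/2)‖T^{♯A}T + TT^{♯A}‖_A. -/

import Mathlib

open scoped ComplexOrder
open ContinuousLinearMap Filter Topology

variable {H : Type*} [NormedAddCommGroup H] [InnerProductSpace ℂ H] [CompleteSpace H]

/-- The A-semi-inner product `⟨x, y⟩_A = ⟨A x, y⟩` (Mathlib convention: conjugate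
linear in the first variable). -/
noncomputable def aInner (A : H →L[ℂ] H) (x y : H) : ℂ := inner ℂ (A x) y

/-- The A-seminorm `‖x‖_A = sqrt ⟨x, x⟩_A`. -/
noncomputable def aNorm (A : H →L[ℂ] H) (x : H) : ℝ := Real.sqrt (aInner A x x).re

/-- `T` is A-bounded. -/
def ABounded (A T : H →L[ℂ] H) : Prop := ∃ c > 0, ∀ x, aNorm A (T x) ≤ c * aNorm A x

/-- The A-operator seminorm. -/
noncomputable def opNormA (A T : H →L[ℂ] H) : ℝ :=
  sSup {r | ∃ x ∈ closure (Set.range A), aNorm A x = 1 ∧ r = aNorm A (T x)}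

/-- The A-numerical radius. -/
noncomputable def wA (A T : H →L[ℂ] H) : ℝ :=
  sSup {r | ∃ x, aNorm A x = 1 ∧ r = ‖aInner A (T x) x‖}

/-- The A-Crawford number. -/
noncomputable def cA (A T : H →L[ℂ] H) : ℝ :=
  sInf {r | ∃ x, aNorm A x = 1 ∧ r = ‖aInner A (T x) x‖}

/-- The `A_α`-seminorm `‖T‖_{A,α}`. -/
noncomputable def alphaNorm (A T : H →L[ℂ] H) (α : ℝ) : ℝ :=
  sSup {r | ∃ x, aNorm A x = 1 ∧
    r = Real.sqrt (α * ‖aInner A (T x) x‖ ^ 2 + (1 - α) * aNorm A (T x) ^ 2)}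

/-- `S` is the A-adjoint `T^{♯_A}` of `T`: the solution of `A X = T* A` whose
range lies in the closure of the range of `A`. -/
def IsAAdjoint (A T S : H →L[ℂ] H) : Prop :=
  A ∘L S = (ContinuousLinearMap.adjoint T) ∘L A ∧ ∀ x, S x ∈ closure (Set.range A)

set_option linter.unusedSectionVars false

variable {A : H →L[ℂ] H}

lemma aInner_self_nonneg (hA : A.IsPositive) (x : H) : 0 ≤ (aInner A x x).re := by
  have := hA.2 x
  simpa [ContinuousLinearMap.reApplyInnerSelf, aInner] using this

lemma aNorm_nonneg (A : H →L[ℂ] H) (x : H) : 0 ≤ aNorm A x := Real.sqrt_nonneg _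

lemma aNorm_sq (hA : A.IsPositive) (x : H) : aNorm A x ^ 2 = (aInner A x x).re :=
  Real.sq_sqrt (aInner_self_nonneg hA x)

lemma hAsa (hA : A.IsPositive) : ContinuousLinearMap.adjoint A = A := by
  have := hA.isSelfAdjoint
  rwa [← ContinuousLinearMap.star_eq_adjoint]

lemma aInner_conj (hA : A.IsPositive) (x y : H) :
    aInner A y x = starRingEnd ℂ (aInner A x y) := by
  unfold aInner
  calc (inner ℂ (A y) x : ℂ) = inner ℂ (ContinuousLinearMap.adjoint A y) x := by rw [hAsa hA]
    _ = inner ℂ y (A x) := ContinuousLinearMap.adjoint_inner_left _ _ _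
    _ = starRingEnd ℂ (inner ℂ (A x) y) := by rw [inner_conj_symm]

lemma aInner_self_im (hA : A.IsPositive) (x : H) : (aInner A x x).im = 0 := by
  have h := aInner_conj hA x x
  have := congrArg Complex.im h
  simp at this
  linarith

lemma conj_mul_self_abs (c : ℂ) : starRingEnd ℂ c * c = ((‖c‖ ^ 2 : ℝ) : ℂ) := by
  rw [mul_comm, Complex.mul_conj, Complex.sq_norm]

lemma aCauchySchwarz (hA : A.IsPositive) (x y : H) :
    ‖aInner A x y‖ ≤ aNorm A x * aNorm A y := by
  set a := (aInner A x x).re with ha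
  set b := (aInner A y y).re with hb
  set c := aInner A x y with hc
  have hann : 0 ≤ a := aInner_self_nonneg hA x
  have hbnn : 0 ≤ b := aInner_self_nonneg hA y
  have key : ∀ t : ℝ, 0 ≤ (‖c‖ ^ 2 * b) * (t * t) + (-(2 * ‖c‖ ^ 2)) * t + a := by
    intro t
    set s : ℂ := (-t : ℂ) * starRingEnd ℂ c with hs
    have hscon : starRingEnd ℂ s = (-t : ℂ) * c := by
      rw [hs, map_mul, Complex.conj_conj]
      congr 1
      simp
    have expand : aInner A (x + s • y) (x + s • y)
        = aInner A x x + ((-(2 * t * ‖c‖ ^ 2) : ℝ) : ℂ)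
          + ((t ^ 2 * ‖c‖ ^ 2 : ℝ) : ℂ) * aInner A y y := by
      have hyx : aInner A y x = starRingEnd ℂ c := aInner_conj hA x y
      have h1 : (inner ℂ (A x) y : ℂ) = c := rfl
      have h2 : (inner ℂ (A y) x : ℂ) = starRingEnd ℂ c := hyx
      simp only [aInner, map_add, map_smul, inner_add_left, inner_add_right,
        inner_smul_left, inner_smul_right, h1, h2]
      have e1 : starRingEnd ℂ s * starRingEnd ℂ c = -(t : ℂ) * (c * starRingEnd ℂ c) := by
        rw [hscon]; ring
      have e2 : s * c = -(t : ℂ) * (starRingEnd ℂ c * c) := by rw [hs]; ring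
      have e3 : s * starRingEnd ℂ s = ((t^2 : ℝ) : ℂ) * (starRingEnd ℂ c * c) := by
        rw [hs, hscon]; push_cast; ring
      have hcc := conj_mul_self_abs c
      have hcc' : c * starRingEnd ℂ c = ((‖c‖ ^ 2 : ℝ) : ℂ) := by
        rw [mul_comm]; exact hcc
      calc inner ℂ (A x) x + (starRingEnd ℂ) s * (starRingEnd ℂ) c
            + s * (c + (starRingEnd ℂ) s * (inner ℂ (A y) y : ℂ))
          = inner ℂ (A x) x + (starRingEnd ℂ s * starRingEnd ℂ c + s * c)
            + s * starRingEnd ℂ s * inner ℂ (A y) y := by ring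
        _ = aInner A x x + ((-(2 * t * ‖c‖ ^ 2) : ℝ) : ℂ)
            + ((t ^ 2 * ‖c‖ ^ 2 : ℝ) : ℂ) * aInner A y y := by
            rw [e1, e2, e3, hcc, hcc']
            push_cast
            have : (inner ℂ (A y) y : ℂ) = aInner A y y := rfl
            rw [this]
            have : (inner ℂ (A x) x : ℂ) = aInner A x x := rfl
            rw [this]
            ring
    have hre := aInner_self_nonneg hA (x + s • y)
    rw [expand] at hre
    simp only [Complex.add_re, Complex.ofReal_re, Complex.mul_re, Complex.ofReal_im] at hre
    have him := aInner_self_im hA y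
    rw [him] at hre
    simp at hre
    rw [← ha, ← hb] at hre
    nlinarith [hre]
  have hd := discrim_le_zero key
  rw [discrim] at hd
  rcases eq_or_lt_of_le (norm_nonneg c) with h0 | h0
  · rw [← h0]
    exact mul_nonneg (aNorm_nonneg A x) (aNorm_nonneg A y)
  · have h0' : 0 < ‖c‖ ^ 2 := by positivity
    have h2 : ‖c‖ ^ 2 ≤ a * b := by nlinarith [hd, h0']
    calc ‖c‖ = Real.sqrt (‖c‖ ^ 2) := by rw [Real.sqrt_sq (norm_nonneg c)]
      _ ≤ Real.sqrt (a * b) := Real.sqrt_le_sqrt h2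
      _ = aNorm A x * aNorm A y := by rw [Real.sqrt_mul hann, aNorm, aNorm, ← ha, ← hb]

lemma aNorm_le (hA : A.IsPositive) (z : H) :
    aNorm A z ≤ Real.sqrt ‖A‖ * ‖z‖ := by
  have h1 : (aInner A z z).re ≤ ‖A‖ * ‖z‖ ^ 2 := by
    calc (aInner A z z).re ≤ ‖aInner A z z‖ := Complex.re_le_norm _
      _ = ‖(inner ℂ (A z) z : ℂ)‖ := by rfl
      _ ≤ ‖A z‖ * ‖z‖ := norm_inner_le_norm _ _
      _ ≤ ‖A‖ * ‖z‖ * ‖z‖ := by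
          gcongr
          exact A.le_opNorm z
      _ = ‖A‖ * ‖z‖ ^ 2 := by ring
  calc aNorm A z ≤ Real.sqrt (‖A‖ * ‖z‖ ^ 2) := Real.sqrt_le_sqrt h1
    _ = Real.sqrt ‖A‖ * ‖z‖ := by
        rw [Real.sqrt_mul (norm_nonneg A), Real.sqrt_sq (norm_nonneg z)]

lemma intertwine_pow {R : H →L[ℂ] H} (hc : A * R = star R * A) :
    ∀ n : ℕ, A * R ^ n = star (R ^ n) * A := by
  intro n
  induction n with
  | zero => simp
  | succ n ih =>
    calc A * R ^ (n+1) = A * R * R ^ n := by rw [pow_succ']; rw [mul_assoc]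
      _ = star R * (A * R ^ n) := by rw [hc, mul_assoc]
      _ = star R * star (R ^ n) * A := by rw [ih, mul_assoc]
      _ = star (R ^ n * R) * A := by rw [star_mul]
      _ = star (R ^ (n+1)) * A := by rw [← pow_succ]

lemma aNorm_pow_sq_le (hA : A.IsPositive) {R : H →L[ℂ] H} (hc : A * R = star R * A)
    (y : H) (m : ℕ) :
    aNorm A ((R ^ m) y) ^ 2 ≤ aNorm A y * aNorm A ((R ^ (2 * m)) y) := by
  have h1 : aNorm A ((R ^ m) y) ^ 2 = (aInner A y ((R ^ (2 * m)) y)).re := by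
    rw [aNorm_sq hA]
    unfold aInner
    have hA1 : A ((R ^ m) y) = (star (R ^ m)) (A y) := by
      have := congrArg (fun f : H →L[ℂ] H => f y) (intertwine_pow hc m)
      simpa [ContinuousLinearMap.mul_apply] using this
    rw [hA1, ContinuousLinearMap.star_eq_adjoint, ContinuousLinearMap.adjoint_inner_left]
    congr 2
    have : (R ^ m) ((R ^ m) y) = (R ^ m * R ^ m) y := rfl
    rw [this, ← pow_add, two_mul]
  rw [h1]
  calc (aInner A y ((R ^ (2 * m)) y)).re ≤ ‖aInner A y ((R ^ (2 * m)) y)‖ :=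
        Complex.re_le_norm _
    _ ≤ aNorm A y * aNorm A ((R ^ (2 * m)) y) := aCauchySchwarz hA _ _

lemma aNorm_bound (hA : A.IsPositive) {R : H →L[ℂ] H} (hc : A * R = star R * A)
    {y : H} (hy : aNorm A y = 1) :
    aNorm A (R y) ≤ max ‖R‖ 1 := by
  set M := max ‖R‖ 1 with hM
  have hM1 : (1:ℝ) ≤ M := le_max_right _ _
  have hMR : ‖R‖ ≤ M := le_max_left _ _
  set K := max (Real.sqrt ‖A‖ * ‖y‖) 1 with hK
  have hK1 : (1:ℝ) ≤ K := le_max_right _ _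
  have claim : ∀ n : ℕ, aNorm A (R y) ^ (2 ^ n) ≤ aNorm A ((R ^ (2 ^ n)) y) := by
    intro n
    induction n with
    | zero => simp only [pow_zero, pow_one]; exact le_refl _
    | succ n ih =>
      have h2 : aNorm A (R y) ^ (2 ^ (n+1)) = (aNorm A (R y) ^ (2 ^ n)) ^ 2 := by
        rw [← pow_mul, pow_succ]
      rw [h2]
      calc (aNorm A (R y) ^ 2 ^ n) ^ 2 ≤ aNorm A ((R ^ (2 ^ n)) y) ^ 2 :=
            pow_le_pow_left₀ (pow_nonneg (aNorm_nonneg _ _) _) ih 2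
        _ ≤ aNorm A y * aNorm A ((R ^ (2 * 2 ^ n)) y) := aNorm_pow_sq_le hA hc y _
        _ = aNorm A ((R ^ (2 ^ (n+1))) y) := by rw [hy, one_mul, pow_succ, mul_comm (2^n) 2]
  have bound : ∀ n : ℕ, aNorm A (R y) ^ (2 ^ n) ≤ M ^ (2 ^ n) * K := by
    intro n
    calc aNorm A (R y) ^ (2 ^ n) ≤ aNorm A ((R ^ (2 ^ n)) y) := claim n
      _ ≤ Real.sqrt ‖A‖ * ‖(R ^ (2 ^ n)) y‖ := aNorm_le hA _
      _ ≤ Real.sqrt ‖A‖ * (‖R‖ ^ (2 ^ n) * ‖y‖) := by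
          refine mul_le_mul_of_nonneg_left ?_ (Real.sqrt_nonneg _)
          calc ‖(R ^ (2 ^ n)) y‖ ≤ ‖R ^ (2 ^ n)‖ * ‖y‖ := (R ^ (2 ^ n)).le_opNorm y
            _ ≤ ‖R‖ ^ (2 ^ n) * ‖y‖ := by
                refine mul_le_mul_of_nonneg_right ?_ (norm_nonneg _)
                exact norm_pow_le' _ (by positivity)
      _ = ‖R‖ ^ (2 ^ n) * (Real.sqrt ‖A‖ * ‖y‖) := by ring
      _ ≤ M ^ (2 ^ n) * K := by
          refine mul_le_mul (pow_le_pow_left₀ (norm_nonneg _) hMR _) (le_max_left _ _)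
            (by positivity) (by positivity)
  by_contra hcon
  push_neg at hcon
  have hMpos : (0:ℝ) < M := lt_of_lt_of_le one_pos hM1
  have hgt : 1 < aNorm A (R y) / M := (one_lt_div hMpos).2 hcon
  obtain ⟨n, hn⟩ := pow_unbounded_of_one_lt K hgt
  have h2n : (aNorm A (R y) / M) ^ n ≤ (aNorm A (R y) / M) ^ (2 ^ n) := by
    apply pow_le_pow_right₀ hgt.le
    exact Nat.le_of_lt Nat.lt_two_pow_self
  have h3 : (aNorm A (R y) / M) ^ (2 ^ n) ≤ K := by
    rw [div_pow, div_le_iff₀ (by positivity)]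
    calc aNorm A (R y) ^ 2 ^ n ≤ M ^ 2 ^ n * K := bound n
      _ = K * M ^ 2 ^ n := by ring
  linarith [lt_of_lt_of_le (lt_of_lt_of_le hn h2n) h3]

lemma aInner_real_smul_left (c : ℝ) (u y : H) :
    aInner A (c • u) y = (c : ℂ) * aInner A u y := by
  unfold aInner
  rw [A.map_smul_of_tower, RCLike.real_smul_eq_coe_smul (K := ℂ) c (A u), inner_smul_left]
  simp

lemma aInner_add_left (u v y : H) : aInner A (u + v) y = aInner A u y + aInner A v y := by
  unfold aInner; rw [map_add, inner_add_left]






lemma opNormA_nonneg (A R : H →L[ℂ] H) : 0 ≤ opNormA A R := by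
  apply Real.sSup_nonneg
  rintro r ⟨x, hx, hx1, rfl⟩
  exact aNorm_nonneg _ _

lemma opNormA_bddAbove (hA : A.IsPositive) {R : H →L[ℂ] H} (hc : A * R = star R * A) :
    BddAbove {r | ∃ x ∈ closure (Set.range ⇑A), aNorm A x = 1 ∧ r = aNorm A (R x)} := by
  refine ⟨max ‖R‖ 1, ?_⟩
  rintro r ⟨y, hy, hy1, rfl⟩
  exact aNorm_bound hA hc hy1

lemma aNorm_le_opNormA (hA : A.IsPositive) {R : H →L[ℂ] H} (hc : A * R = star R * A)
    {x : H} (hx : aNorm A x = 1) : aNorm A (R x) ≤ opNormA A R := by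
  classical
  set K : Submodule ℂ H := (LinearMap.range (A : H →ₗ[ℂ] H)).topologicalClosure with hKdef
  haveI : CompleteSpace K := (LinearMap.range (A : H →ₗ[ℂ] H)).isClosed_topologicalClosure.completeSpace_coe
  set p : H := ↑(K.orthogonalProjectionOnto x) with hpdef
  have hpK : p ∈ K := SetLike.coe_mem _
  have hkK : x - p ∈ Kᗮ := Submodule.sub_starProjection_mem_orthogonal (K := K) x
  have hmem : ∀ u ∈ K, (inner ℂ u (x - p) : ℂ) = 0 := (Submodule.mem_orthogonal _ _).1 hkK
  have hmem' : ∀ u ∈ K, (inner ℂ (x - p) u : ℂ) = 0 := (K.mem_orthogonal' (x - p)).1 hkK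
  have hrange : ∀ w : H, A w ∈ K := fun w =>
    Submodule.le_topologicalClosure _ (LinearMap.mem_range_self _ w)
  have hsa := hAsa hA
  have hAk : A (x - p) = 0 := by
    have h1 : (inner ℂ (A (x - p)) (A (x - p)) : ℂ) = 0 := by
      calc (inner ℂ (A (x - p)) (A (x - p)) : ℂ)
          = inner ℂ (ContinuousLinearMap.adjoint A (x - p)) (A (x - p)) := by rw [hsa]
        _ = inner ℂ (x - p) (A (A (x - p))) := ContinuousLinearMap.adjoint_inner_left _ _ _
        _ = 0 := hmem' _ (hrange _)
    exact inner_self_eq_zero.1 h1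
  have hAx : A x = A p := by
    have := map_sub A x p
    rw [hAk] at this
    linear_combination (norm := module) -this
  have hxsplit : x = p + (x - p) := by abel
  have hip : aInner A x x = aInner A p p := by
    unfold aInner
    rw [hAx]
    conv_lhs => rw [hxsplit]
    rw [inner_add_right, hmem _ (hrange p), add_zero]
  have hp1 : aNorm A p = 1 := by
    unfold aNorm at hx ⊢
    rw [← hip]
    exact hx
  have hcapp : ∀ w, A (R w) = (star R) (A w) := by
    intro w
    have := congrArg (fun f : H →L[ℂ] H => f w) hc
    simpa using this
  have hARx : aNorm A (R x) = aNorm A (R p) := by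
    have hval : aInner A (R x) (R x) = aInner A (R p) (R p) := by
      unfold aInner
      have h1 : A (R x) = A (R p) := by rw [hcapp, hcapp, hAx]
      rw [h1]
      have h2 : R x = R p + R (x - p) := by rw [map_sub]; abel
      conv_lhs => rw [h2]
      rw [inner_add_right]
      have h3 : (inner ℂ (A (R p)) (R (x - p)) : ℂ) = 0 := by
        calc (inner ℂ (A (R p)) (R (x - p)) : ℂ)
            = inner ℂ (ContinuousLinearMap.adjoint A (R p)) (R (x - p)) := by rw [hsa]
          _ = inner ℂ (R p) (A (R (x - p))) := ContinuousLinearMap.adjoint_inner_left _ _ _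
          _ = 0 := by rw [hcapp, hAk, map_zero, inner_zero_right]
      rw [h3, add_zero]
    unfold aNorm
    rw [hval]
  have hpcl : p ∈ closure (Set.range ⇑A) := by
    have : (K : Set H) = closure (Set.range ⇑A) := by
      rw [hKdef, Submodule.topologicalClosure_coe]
      congr 1
    rw [← this]
    exact hpK
  rw [hARx]
  exact le_csSup (opNormA_bddAbove hA hc) ⟨p, hpcl, hp1, rfl⟩







variable {T S : H →L[ℂ] H}

lemma hs1 (hT : IsAAdjoint A T S) : A * S = star T * A := by
  rw [ContinuousLinearMap.mul_def, ContinuousLinearMap.mul_def,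
    ContinuousLinearMap.star_eq_adjoint]
  exact hT.1

lemma hs2 (hA : A.IsPositive) (hT : IsAAdjoint A T S) : A * T = star S * A := by
  have h := congrArg star (hs1 hT)
  rw [star_mul, star_mul, star_star, hA.isSelfAdjoint.star_eq] at h
  exact h.symm

lemma hcommR (hA : A.IsPositive) (hT : IsAAdjoint A T S) (β : ℝ) :
    A * ((β/2) • (S ∘L T + T ∘L S) + (1 - β) • (S ∘L T))
      = star ((β/2) • (S ∘L T + T ∘L S) + (1 - β) • (S ∘L T)) * A := by
  have h1 := hs1 hT
  have h2 := hs2 hA hT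
  have e1 : A * (S * T) = star (S * T) * A := by
    rw [star_mul, ← mul_assoc, h1, mul_assoc, h2, ← mul_assoc]
  have e2 : A * (T * S) = star (T * S) * A := by
    rw [star_mul, ← mul_assoc, h2, mul_assoc, h1, ← mul_assoc]
  have hST : S ∘L T = S * T := rfl
  have hTS : T ∘L S = T * S := rfl
  rw [hST, hTS]
  simp only [mul_add, add_mul, mul_smul_comm, smul_mul_assoc, star_add, star_smul,
    star_trivial, e1, e2]

lemma perpoint (hA : A.IsPositive) (hT : IsAAdjoint A T S) {β : ℝ}
    (hβ : β ∈ Set.Icc (0:ℝ) 1) {x : H} (hx : aNorm A x = 1) :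
    β * ‖aInner A (T x) x‖ ^ 2 + (1 - β) * aNorm A (T x) ^ 2 ≤
      opNormA A ((β/2) • (S ∘L T + T ∘L S) + (1 - β) • (S ∘L T)) := by
  set R := (β/2) • (S ∘L T + T ∘L S) + (1 - β) • (S ∘L T) with hR
  have hc := hcommR hA hT β
  have hsa := hAsa hA
  have happ1 : ∀ w, A (S w) = ContinuousLinearMap.adjoint T (A w) := by
    intro w
    have := congrArg (fun f : H →L[ℂ] H => f w) (hs1 hT)
    simpa [ContinuousLinearMap.star_eq_adjoint] using this
  have happ2 : ∀ w, A (T w) = ContinuousLinearMap.adjoint S (A w) := by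
    intro w
    have := congrArg (fun f : H →L[ℂ] H => f w) (hs2 hA hT)
    simpa [ContinuousLinearMap.star_eq_adjoint] using this
  set nT := aNorm A (T x) with hnT
  set nS := aNorm A (S x) with hnS
  have habs : ‖aInner A (T x) x‖ = ‖aInner A (S x) x‖ := by
    have e1 : aInner A (S x) x = inner ℂ (A x) (T x) := by
      unfold aInner
      rw [happ1, ContinuousLinearMap.adjoint_inner_left]
    have e2 : starRingEnd ℂ (aInner A (T x) x) = inner ℂ (A x) (T x) := by
      unfold aInner
      rw [inner_conj_symm]
      calc (inner ℂ x (A (T x)) : ℂ) = inner ℂ (ContinuousLinearMap.adjoint A x) (T x) := by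
            rw [ContinuousLinearMap.adjoint_inner_left]
        _ = inner ℂ (A x) (T x) := by rw [hsa]
    rw [e1, ← e2, Complex.norm_conj]
  have hCS1 : ‖aInner A (T x) x‖ ≤ nT := by
    have := aCauchySchwarz hA (T x) x
    rwa [hx, mul_one] at this
  have hCS2 : ‖aInner A (S x) x‖ ≤ nS := by
    have := aCauchySchwarz hA (S x) x
    rwa [hx, mul_one] at this
  have key1 : ‖aInner A (T x) x‖ ^ 2 ≤ nT * nS := by
    have h0 := norm_nonneg (aInner A (T x) x)
    calc ‖aInner A (T x) x‖ ^ 2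
        = ‖aInner A (T x) x‖ * ‖aInner A (S x) x‖ := by
          rw [← habs]; ring
      _ ≤ nT * nS := by
          apply mul_le_mul hCS1 hCS2 (norm_nonneg _) (aNorm_nonneg _ _)
  have hST' : aInner A ((S ∘L T) x) x = aInner A (T x) (T x) := by
    unfold aInner
    have : (S ∘L T) x = S (T x) := rfl
    rw [this, happ1, ContinuousLinearMap.adjoint_inner_left]
  have hTS' : aInner A ((T ∘L S) x) x = aInner A (S x) (S x) := by
    unfold aInner
    have : (T ∘L S) x = T (S x) := rfl
    rw [this, happ2, ContinuousLinearMap.adjoint_inner_left]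
  have hRapp : R x = (β/2) • ((S ∘L T) x + (T ∘L S) x) + (1-β) • ((S ∘L T) x) := by
    rfl
  have hval : (aInner A (R x) x).re = (β/2) * (nT^2 + nS^2) + (1-β) * nT^2 := by
    rw [hRapp]
    rw [aInner_add_left, aInner_real_smul_left, aInner_real_smul_left, aInner_add_left,
      hST', hTS']
    rw [Complex.add_re, Complex.re_ofReal_mul, Complex.re_ofReal_mul, Complex.add_re,
      aNorm_sq hA, aNorm_sq hA]
  have hfin : (aInner A (R x) x).re ≤ opNormA A R := by
    calc (aInner A (R x) x).re ≤ ‖aInner A (R x) x‖ := Complex.re_le_norm _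
      _ ≤ aNorm A (R x) * aNorm A x := aCauchySchwarz hA _ _
      _ = aNorm A (R x) := by rw [hx, mul_one]
      _ ≤ opNormA A R := aNorm_le_opNormA hA hc hx
  have hβ0 := hβ.1
  have hβ1 := hβ.2
  nlinarith [key1, sq_nonneg (nT - nS), hfin, hval, aNorm_nonneg A (T x), aNorm_nonneg A (S x)]

lemma aNorm_smul_nonneg {c : ℝ} (hc : 0 ≤ c) (z : H) : aNorm A (c • z) = c * aNorm A z := by
  have h : aInner A (c • z) (c • z) = ((c * c : ℝ) : ℂ) * aInner A z z := by
    rw [aInner_real_smul_left]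
    unfold aInner
    rw [RCLike.real_smul_eq_coe_smul (K := ℂ) c z, inner_smul_right]
    push_cast
    rw [mul_assoc]
    rfl
  unfold aNorm
  rw [h, Complex.re_ofReal_mul, Real.sqrt_mul (mul_nonneg hc hc), Real.sqrt_mul_self hc]


theorem stmt17 (A T S : H →L[ℂ] H) (hA : A.IsPositive) (hT : IsAAdjoint A T S)
    (α : ℝ) (hα : α ∈ Set.Icc (0:ℝ) 1) :
    alphaNorm A T α ^ 2 ≤
      opNormA A ((α/2) • (S ∘L T + T ∘L S) + (1 - α) • (S ∘L T)) ∧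
    wA A T ^ 2 ≤
      sInf {r | ∃ β ∈ Set.Icc (0:ℝ) 1,
        r = opNormA A ((β/2) • (S ∘L T + T ∘L S) + (1 - β) • (S ∘L T))} ∧
    sInf {r | ∃ β ∈ Set.Icc (0:ℝ) 1,
        r = opNormA A ((β/2) • (S ∘L T + T ∘L S) + (1 - β) • (S ∘L T))} ≤
      (1/2) * opNormA A (S ∘L T + T ∘L S) := by
  have part1 : ∀ β ∈ Set.Icc (0:ℝ) 1, alphaNorm A T β ^ 2 ≤
      opNormA A ((β/2) • (S ∘L T + T ∘L S) + (1 - β) • (S ∘L T)) := by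
    intro β hβ
    set M := opNormA A ((β/2) • (S ∘L T + T ∘L S) + (1 - β) • (S ∘L T)) with hM
    have hM0 : 0 ≤ M := opNormA_nonneg _ _
    have hle : alphaNorm A T β ≤ Real.sqrt M := by
      apply Real.sSup_le _ (Real.sqrt_nonneg _)
      rintro r ⟨x, hx1, rfl⟩
      exact Real.sqrt_le_sqrt (perpoint hA hT hβ hx1)
    have h0 : 0 ≤ alphaNorm A T β := by
      apply Real.sSup_nonneg
      rintro r ⟨x, hx1, rfl⟩
      exact Real.sqrt_nonneg _
    calc alphaNorm A T β ^ 2 ≤ Real.sqrt M ^ 2 := pow_le_pow_left₀ h0 hle 2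
      _ = M := Real.sq_sqrt hM0
  have part2 : ∀ β ∈ Set.Icc (0:ℝ) 1, wA A T ^ 2 ≤
      opNormA A ((β/2) • (S ∘L T + T ∘L S) + (1 - β) • (S ∘L T)) := by
    intro β hβ
    set M := opNormA A ((β/2) • (S ∘L T + T ∘L S) + (1 - β) • (S ∘L T)) with hM
    have hM0 : 0 ≤ M := opNormA_nonneg _ _
    have hle : wA A T ≤ Real.sqrt M := by
      apply Real.sSup_le _ (Real.sqrt_nonneg _)
      rintro r ⟨x, hx1, rfl⟩
      have hTx := perpoint hA hT hβ hx1
      have hCS1 : ‖aInner A (T x) x‖ ≤ aNorm A (T x) := by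
        have := aCauchySchwarz hA (T x) x
        rwa [hx1, mul_one] at this
      have habs0 := norm_nonneg (aInner A (T x) x)
      rw [← hM] at hTx
      have hsq : ‖aInner A (T x) x‖ ^ 2 ≤ M := by
        nlinarith [hβ.1, hβ.2, pow_le_pow_left₀ habs0 hCS1 2]
      calc ‖aInner A (T x) x‖
          = Real.sqrt (‖aInner A (T x) x‖ ^ 2) := by
            rw [Real.sqrt_sq habs0]
        _ ≤ Real.sqrt M := Real.sqrt_le_sqrt hsq
    have h0 : 0 ≤ wA A T := by
      apply Real.sSup_nonneg
      rintro r ⟨x, hx1, rfl⟩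
      exact norm_nonneg _
    calc wA A T ^ 2 ≤ Real.sqrt M ^ 2 := pow_le_pow_left₀ h0 hle 2
      _ = M := Real.sq_sqrt hM0
  refine ⟨part1 α hα, ?_, ?_⟩
  · apply le_csInf
    · exact ⟨_, ⟨0, ⟨le_refl _, zero_le_one⟩, rfl⟩⟩
    · rintro r ⟨β, hβ, rfl⟩
      exact part2 β hβ
  · have hbdd : BddBelow {r | ∃ β ∈ Set.Icc (0:ℝ) 1,
        r = opNormA A ((β/2) • (S ∘L T + T ∘L S) + (1 - β) • (S ∘L T))} := by
      refine ⟨0, ?_⟩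
      rintro r ⟨β, hβ, rfl⟩
      exact opNormA_nonneg _ _
    have hmem : opNormA A (((1:ℝ)/2) • (S ∘L T + T ∘L S) + (1 - (1:ℝ)) • (S ∘L T)) ∈
        {r | ∃ β ∈ Set.Icc (0:ℝ) 1,
          r = opNormA A ((β/2) • (S ∘L T + T ∘L S) + (1 - β) • (S ∘L T))} :=
      ⟨1, ⟨zero_le_one, le_refl _⟩, rfl⟩
    refine le_trans (csInf_le hbdd hmem) ?_
    have hsimp : ((1:ℝ)/2) • (S ∘L T + T ∘L S) + (1 - (1:ℝ)) • (S ∘L T)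
        = ((1:ℝ)/2) • (S ∘L T + T ∘L S) := by
      rw [sub_self, zero_smul, add_zero]
    rw [hsimp]
    set Y := S ∘L T + T ∘L S with hY
    have hcY : A * Y = star Y * A := by
      have h1 := hs1 hT
      have h2 := hs2 hA hT
      have e1 : A * (S * T) = star (S * T) * A := by
        rw [star_mul, ← mul_assoc, h1, mul_assoc, h2, ← mul_assoc]
      have e2 : A * (T * S) = star (T * S) * A := by
        rw [star_mul, ← mul_assoc, h2, mul_assoc, h1, ← mul_assoc]
      have hST : S ∘L T = S * T := rfl
      have hTS : T ∘L S = T * S := rfl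
      rw [hY, hST, hTS, mul_add, e1, e2, star_add, add_mul]
    have hbddY := opNormA_bddAbove hA hcY
    have h0Y : 0 ≤ opNormA A Y := opNormA_nonneg _ _
    apply Real.sSup_le _ (by linarith)
    rintro r ⟨x, hx, hx1, rfl⟩
    have happ : (((1:ℝ)/2) • Y) x = ((1:ℝ)/2) • (Y x) := rfl
    rw [happ, aNorm_smul_nonneg (by norm_num : (0:ℝ) ≤ (1:ℝ)/2)]
    have hle : aNorm A (Y x) ≤ opNormA A Y := le_csSup hbddY ⟨x, hx, hx1, rfl⟩
    linarith
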